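/- (Corollary 4.1) Let P_k denote the normalized shifted Legendre polynomial of degree k on [0,1] and ξ₁ = 1/(2√3). Let S be a finite set of pairs (i,j) of nonnegative integers with i + j even and i + j > 1 for every (i,j) ∈ S, and let Ā(τ,σ) = α₀₀ − (ξ₁/2) P₁(σ) + (ξ₁/2) P₁(τ) + Σ_{(i,j)∈S} α_{(i,j)} P_i(τ) P_j(σ) with arbitrary real α₀₀ and α_{(i,j)}. Let (b_i, c_i)_{i=1}^s satisfy c_i ∈ [0,1], b_{s+1−i} = b_i and c_{s+1−i} = 1 − c_i for all i. Then the s-stage RKN coefficients ā_{ij} = b_j Ā(c_i, c_j), b̄_i = b_i (1 − c_i), β_i = b_i, γ_i = c_i satisfy the classical RKN symmetry conditions: γ_i = 1 − γ_{s+1−i}, ā_{ij} = β_{s+1−j}(1 − γ_{s+1−i}) − b̄_{s+1−j} + ā_{s+1−i,s+1−j}, b̄_i = β_{s+1−i} − b̄_{s+1−i}, β_i = β_{s+1−i}, for all i, j = 1,…,s. -/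

import Mathlib

open Set

noncomputable section

/-- The normalized shifted Legendre polynomial of degree `k` on `[0,1]`,
given by the Rodrigues formula `P_k(x) = (√(2k+1)/k!) dᵏ/dxᵏ [(x² - x)ᵏ]`. -/
def legP (k : ℕ) (x : ℝ) : ℝ :=
  (Real.sqrt (2 * (k : ℝ) + 1) / (Nat.factorial k : ℝ)) *
    iteratedDeriv k (fun y : ℝ => (y ^ 2 - y) ^ k) x

/-- `ξ₁ = 1/(2√3)`. -/
def xi1 : ℝ := 1 / (2 * Real.sqrt 3)

lemma legP_one_sub (k : ℕ) (x : ℝ) : legP k (1 - x) = (-1 : ℝ) ^ k * legP k x := by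
  have hfun : (fun y : ℝ => (((1 : ℝ) + -y) ^ 2 - (1 + -y)) ^ k)
      = fun y : ℝ => (y ^ 2 - y) ^ k := by funext y; ring
  have h1 : iteratedDeriv k (fun y : ℝ => (y ^ 2 - y) ^ k) x
      = (-1 : ℝ) ^ k • iteratedDeriv k (fun y : ℝ => (y ^ 2 - y) ^ k) (1 - x) := by
    calc iteratedDeriv k (fun y : ℝ => (y ^ 2 - y) ^ k) x
        = iteratedDeriv k (fun y : ℝ => (((1:ℝ) + -y) ^ 2 - (1 + -y)) ^ k) x := by
          rw [hfun]
      _ = (-1 : ℝ) ^ k • iteratedDeriv k (fun y : ℝ => (((1:ℝ) + y) ^ 2 - (1 + y)) ^ k) (-x) := by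
          exact iteratedDeriv_comp_neg k (fun y : ℝ => (((1:ℝ) + y) ^ 2 - (1 + y)) ^ k) x
      _ = (-1 : ℝ) ^ k • iteratedDeriv k (fun y : ℝ => (y ^ 2 - y) ^ k) (1 + -x) := by
          rw [congrFun (iteratedDeriv_comp_const_add k (fun y : ℝ => (y ^ 2 - y) ^ k) 1) (-x)]
      _ = (-1 : ℝ) ^ k • iteratedDeriv k (fun y : ℝ => (y ^ 2 - y) ^ k) (1 - x) := by
          norm_num [sub_eq_add_neg]
  have hsq : ((-1 : ℝ) ^ k) * ((-1 : ℝ) ^ k) = 1 := by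
    rw [← pow_add]; exact Even.neg_one_pow ⟨k, rfl⟩
  unfold legP
  rw [h1]
  simp only [smul_eq_mul]
  linear_combination (-(Real.sqrt (2 * (k : ℝ) + 1) / (Nat.factorial k : ℝ))) *
    iteratedDeriv k (fun y : ℝ => (y ^ 2 - y) ^ k) (1 - x) * hsq

lemma legP_one (x : ℝ) : legP 1 x = Real.sqrt 3 * (2 * x - 1) := by
  have hfun : (fun y : ℝ => (y ^ 2 - y) ^ 1) = fun y : ℝ => y ^ 2 - y := by
    funext y; ring
  have hderiv : deriv (fun y : ℝ => y ^ 2 - y) x = 2 * x - 1 := by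
    rw [deriv_fun_sub (by fun_prop) (by fun_prop), deriv_pow_field, deriv_id'']
    push_cast; ring
  simp [legP, iteratedDeriv_one, hfun, hderiv]
  norm_num

lemma xi1_legP_one (x : ℝ) : xi1 * legP 1 x = x - 1 / 2 := by
  have h3 : Real.sqrt 3 * Real.sqrt 3 = 3 := Real.mul_self_sqrt (by norm_num)
  have hne : Real.sqrt 3 ≠ 0 := by positivity
  rw [legP_one, xi1]
  field_simp

/-- Corollary 4.1: for
`Ā(τ,σ) = α₀₀ - (ξ₁/2)P₁(σ) + (ξ₁/2)P₁(τ) + Σ_{(i,j)∈S} α_{(i,j)} P_i(τ)P_j(σ)`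
(`i + j` even, `> 1` on `S`) and a symmetric quadrature formula `(bᵢ, cᵢ)`, the RKN
coefficients `āᵢⱼ = bⱼ Ā(cᵢ,cⱼ)`, `b̄ᵢ = bᵢ(1-cᵢ)`, `βᵢ = bᵢ`, `γᵢ = cᵢ` satisfy the
classical RKN symmetry conditions.  (Here `i.rev` plays the role of `s+1-i`.) -/
theorem quadrature_symmetric_RKN
    (S : Finset (ℕ × ℕ)) (hS : ∀ p ∈ S, Even (p.1 + p.2) ∧ 1 < p.1 + p.2)
    (α₀₀ : ℝ) (α : ℕ × ℕ → ℝ)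
    (Abar : ℝ → ℝ → ℝ)
    (hAbar : ∀ τ σ : ℝ, Abar τ σ =
      α₀₀ - (xi1 / 2) * legP 1 σ + (xi1 / 2) * legP 1 τ +
        ∑ p ∈ S, α p * legP p.1 τ * legP p.2 σ)
    (s : ℕ) (b c : Fin s → ℝ)
    (hc : ∀ i, c i ∈ Set.Icc (0:ℝ) 1)
    (hbrev : ∀ i : Fin s, b i.rev = b i)
    (hcrev : ∀ i : Fin s, c i.rev = 1 - c i) :
    (∀ i : Fin s, c i = 1 - c i.rev) ∧
    (∀ i j : Fin s, b j * Abar (c i) (c j) =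
        b j.rev * (1 - c i.rev) - b j.rev * (1 - c j.rev) +
          b j.rev * Abar (c i.rev) (c j.rev)) ∧
    (∀ i : Fin s, b i * (1 - c i) = b i.rev - b i.rev * (1 - c i.rev)) ∧
    (∀ i : Fin s, b i = b i.rev) := by
  refine ⟨fun i => by rw [hcrev]; ring, ?_, fun i => by rw [hbrev, hcrev]; ring,
    fun i => (hbrev i).symm⟩
  intro i j
  rw [hbrev, hcrev i, hcrev j, hAbar, hAbar]
  have hsum : ∑ p ∈ S, α p * legP p.1 (1 - c i) * legP p.2 (1 - c j)
      = ∑ p ∈ S, α p * legP p.1 (c i) * legP p.2 (c j) := by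
    refine Finset.sum_congr rfl fun p hp => ?_
    rw [legP_one_sub, legP_one_sub]
    have : ((-1 : ℝ) ^ p.1) * ((-1 : ℝ) ^ p.2) = 1 := by
      rw [← pow_add]; exact Even.neg_one_pow (hS p hp).1
    linear_combination α p * legP p.1 (c i) * legP p.2 (c j) * this
  rw [hsum, legP_one_sub 1 (c i), legP_one_sub 1 (c j)]
  have hi := xi1_legP_one (c i)
  have hj := xi1_legP_one (c j)
  linear_combination b j * hi - b j * hj


end
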